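/- Let A be a (not necessarily commutative) unital ring, δ : A → A an additive map, and ω ∈ A, satisfying: (i) δ(δ(δ(a))) = 0 for all a ∈ A; (ii) δ(ω·a) = δ(ω)·a − ω·δ(a) for all a ∈ A; (iii) δ(δ(ω)·a) = δ(δ(ω))·a + δ(ω)·δ(a) for all a ∈ A. Define ∇ : A → A by ∇(a) = δ(a) + ω·a. Then for every a ∈ A the 3-curvature is given by ∇³(a) = (δ²(ω) + δ(ω)·ω + ω³)·a + (δ(ω) + ω²)·δ(a) + ω·δ²(a). -/
import Mathlib


/-- For an additive map `δ` with `δ³ = 0`, satisfying the odd Leibniz rule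
for `ω` and the even Leibniz rule for `δ ω`, the 3-curvature of `∇ a = δ a + ω * a` is
`∇³(a) = (δ²(ω) + δ(ω)ω + ω³)a + (δ(ω) + ω²)δ(a) + ω δ²(a)`. -/
theorem nabla_cube_eq
    (A : Type*) [Ring A] (δ : A → A)
    (hδ_add : ∀ a b : A, δ (a + b) = δ a + δ b)
    (ω : A)
    (hδ_cube : ∀ a : A, δ (δ (δ a)) = 0)
    (hleibniz : ∀ a : A, δ (ω * a) = δ ω * a - ω * δ a)
    (hleibniz' : ∀ a : A, δ (δ ω * a) = δ (δ ω) * a + δ ω * δ a)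
    (nabla : A → A) (hnabla : ∀ a : A, nabla a = δ a + ω * a) :
    ∀ a : A, nabla (nabla (nabla a)) =
      (δ (δ ω) + δ ω * ω + ω * ω * ω) * a + (δ ω + ω * ω) * δ a + ω * δ (δ a) := by
  have hsub : ∀ a b : A, δ (a - b) = δ a - δ b := fun a b =>
    eq_sub_of_add_eq (by rw [← hδ_add, sub_add_cancel])
  intro a
  simp only [hsub, hnabla, hδ_add, hleibniz, hleibniz', hδ_cube, mul_add, add_mul, mul_sub, sub_mul,
    mul_assoc]
  abel
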